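/- For all complex numbers λ, μ with μ² ≠ 4 and λ ≠ 0, if Ψ(λ,μ) = (4 - μ² + λ²)/(4λ) and F(λ,μ) = (2λ²/(4-μ²), μ + μλ²/(4-μ²)), then Ψ(F(λ,μ)) = 2Ψ(λ,μ)² - 1 (i.e., F is semi-conjugate to the Chebyshev map α(x)=2x²-1 via Ψ). -/

import Mathlib

/-- `F(λ,μ) = (2λ²/(4-μ²), μ + μλ²/(4-μ²))` is semi-conjugate to the Chebyshev map
`α(x) = 2x² - 1` via `Ψ(λ,μ) = (4 - μ² + λ²)/(4λ)`. -/
theorem psi_semiconjugacy (l m : ℂ) (hm : m ^ 2 ≠ 4) (hl : l ≠ 0)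
    (Ψ : ℂ → ℂ → ℂ) (hΨ : ∀ a b, Ψ a b = (4 - b ^ 2 + a ^ 2) / (4 * a))
    (F : ℂ → ℂ → ℂ × ℂ)
    (hF : ∀ a b, F a b = (2 * a ^ 2 / (4 - b ^ 2), b + b * a ^ 2 / (4 - b ^ 2))) :
    Ψ (F l m).1 (F l m).2 = 2 * (Ψ l m) ^ 2 - 1 := by
  have hd : (4 : ℂ) - m ^ 2 ≠ 0 := fun h => hm (by linear_combination -h)
  have ha : 2 * l ^ 2 / (4 - m ^ 2) ≠ 0 := by
    apply div_ne_zero _ hd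
    simpa using pow_ne_zero 2 hl
  have hD : (-(m ^ 2 * l ^ 2 * 64) + m ^ 4 * l ^ 2 * 8 + l ^ 2 * 128 : ℂ) ≠ 0 := by
    have h8 : (8 : ℂ) ≠ 0 := by norm_num
    have := mul_ne_zero (mul_ne_zero (mul_ne_zero h8 (pow_ne_zero 2 hl)) hd) hd
    intro h; exact this (by linear_combination h)
  simp only [hF, hΨ]
  rw [div_eq_iff (mul_ne_zero (by norm_num) ha : 4 * (2 * l ^ 2 / (4 - m ^ 2)) ≠ 0)]
  field_simp
  ring
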